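/- arXiv:2601.06629 — 5 statements merged into one kernel-verified Lean document; each statement's English description precedes it below -/
import Mathlib

section
/- Let X₁,…,Xₙ be i.i.d. with CDF F and empirical CDF Fₙ, and let μ be any probability measure on ℝ. Then E[∫|F − Fₙ| dμ] ≤ √(π/(2n)), and consequently there exists a realization of X₁,…,Xₙ for which ∫|F − Fₙ| dμ ≤ √(π/(2n)). -/
open MeasureTheory ProbabilityTheory Real

/-- Key pointwise bound: for fixed `x`, `E|p - Fₙ(x)| ≤ 1/(2√n)`. -/
lemma pointwise_L1_bound
    {Ω : Type*} [MeasureSpace Ω] [IsProbabilityMeasure (ℙ : Measure Ω)]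
    (n : ℕ) (hn : 0 < n)
    (X : Fin n → Ω → ℝ)
    (hmeas : ∀ i, Measurable (X i))
    (ν : Measure ℝ) [IsProbabilityMeasure ν]
    (hid : ∀ i, Measure.map (X i) ℙ = ν)
    (hindep : iIndepFun X ℙ)
    (x : ℝ) :
    (∫ ω, |(ν (Set.Iic x)).toReal - (∑ i, if X i ω ≤ x then (1 : ℝ) else 0) / n| ∂ℙ)
      ≤ Real.sqrt (1 / (4 * n)) := by
  have hn' : (n : ℝ) ≠ 0 := Nat.cast_ne_zero.mpr hn.ne'
  set p : ℝ := (ν (Set.Iic x)).toReal with hp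
  set Y : Fin n → Ω → ℝ := fun i ω => if X i ω ≤ x then (1 : ℝ) else 0 with hYdef
  have hYmeas : ∀ i, Measurable (Y i) := fun i =>
    Measurable.ite (hmeas i measurableSet_Iic) measurable_const measurable_const
  have hYbdd : ∀ i ω, Y i ω ∈ Set.Icc (0 : ℝ) 1 := by
    intro i ω; by_cases h : X i ω ≤ x <;> simp [hYdef, h]
  have hYmem : ∀ i, MemLp (Y i) 2 ℙ := fun i =>
    memLp_of_bounded (ae_of_all _ (hYbdd i)) (hYmeas i).aestronglyMeasurable 2
  have hEY : ∀ i, (∫ ω, Y i ω ∂ℙ) = p := by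
    intro i
    have h1 : Y i = Set.indicator (X i ⁻¹' Set.Iic x) (fun _ => (1 : ℝ)) := by
      ext ω; by_cases h : X i ω ≤ x <;> simp [hYdef, Set.indicator, h, Set.mem_Iic]
    rw [h1, integral_indicator_const _ (hmeas i measurableSet_Iic)]
    have h2 : ℙ (X i ⁻¹' Set.Iic x) = ν (Set.Iic x) := by
      rw [← hid i, Measure.map_apply (hmeas i) measurableSet_Iic]
    simp [measureReal_def, h2, hp]
  set S : Ω → ℝ := fun ω => ∑ i, Y i ω with hSdef
  have hSsum : S = ∑ i, Y i := by ext ω; simp [hSdef]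
  have hSmem : MemLp S 2 ℙ := by
    rw [hSsum]; exact memLp_finset_sum' _ (fun i _ => hYmem i)
  have hSint : Integrable S ℙ := hSmem.integrable one_le_two
  have hES : (∫ ω, S ω ∂ℙ) = n * p := by
    rw [hSdef]
    rw [integral_finset_sum _ (fun i _ => (hYmem i).integrable one_le_two)]
    simp [hEY]
  -- variance of S
  have hvar_each : ∀ i, variance (Y i) ℙ ≤ 1 / 4 := by
    intro i
    have := variance_le_sq_of_bounded (μ := (ℙ : Measure Ω)) (a := 0) (b := 1)
      (ae_of_all _ (hYbdd i)) (hYmeas i).aemeasurable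
    refine this.trans_eq ?_
    norm_num
  have hvarS : variance S ℙ ≤ n * (1 / 4) := by
    rw [hSsum]
    rw [IndepFun.variance_sum (fun i _ => hYmem i) ?_]
    · calc (∑ i, variance (Y i) ℙ) ≤ ∑ _i : Fin n, (1/4 : ℝ) :=
            Finset.sum_le_sum (fun i _ => hvar_each i)
        _ = n * (1/4) := by simp [mul_comm]
    · intro i _ j _ hij
      have h := (hindep.indepFun hij).comp
        (Measurable.ite measurableSet_Iic measurable_const measurable_const
          : Measurable (fun t : ℝ => if t ≤ x then (1:ℝ) else 0))
        (Measurable.ite measurableSet_Iic measurable_const measurable_const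
          : Measurable (fun t : ℝ => if t ≤ x then (1:ℝ) else 0))
      exact h
  -- Z = p - S/n
  set Z : Ω → ℝ := fun ω => p - S ω / n with hZdef
  have hZeq : Z = fun ω => (-(1/n)) * (S ω - n * p) := by
    ext ω; simp only [hZdef]; field_simp; ring
  have hWmem : MemLp (fun ω => S ω - n * p) 2 ℙ := hSmem.sub (memLp_const _)
  have hZmem : MemLp Z 2 ℙ := by
    rw [hZeq]; exact hWmem.const_mul _
  have hEW : (∫ ω, (S ω - n * p) ∂ℙ) = 0 := by
    rw [integral_sub hSint (integrable_const _)]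
    simp [hES]
  have hEZ : (∫ ω, Z ω ∂ℙ) = 0 := by
    rw [hZeq, integral_const_mul, hEW, mul_zero]
  -- E[Z^2] = var Z = (1/n^2) var S
  have hEZ2 : (∫ ω, Z ω ^ 2 ∂ℙ) = variance Z ℙ := by
    rw [variance_of_integral_eq_zero hZmem.1.aemeasurable hEZ]
  have hvarW : variance (fun ω => S ω - n * p) ℙ = variance S ℙ := by
    have h1 := variance_of_integral_eq_zero hWmem.1.aemeasurable hEW
    have h2 : (∫ ω, ((fun ω => S ω - n * p) ^ 2) ω ∂ℙ) = variance S ℙ := by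
      have hexp : ∀ ω, ((fun ω => S ω - n * p) ^ 2) ω
          = S ω ^ 2 - 2 * (n * p) * S ω + (n*p)^2 := by intro ω; simp [Pi.pow_apply]; ring
      rw [integral_congr_ae (ae_of_all _ hexp)]
      have hS2 : Integrable (fun ω => S ω ^ 2) ℙ := hSmem.integrable_sq
      have hI2 : Integrable (fun a => 2 * ((n:ℝ) * p) * S a) ℙ := hSint.const_mul _
      have hI1 : Integrable (fun a => S a ^ 2 - 2 * ((n:ℝ) * p) * S a) ℙ := hS2.sub hI2
      have e1 : (∫ a, (S a ^ 2 - 2 * ((n:ℝ) * p) * S a + ((n:ℝ)*p)^2) ∂ℙ)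
          = (∫ a, S a ^ 2 ∂ℙ) - 2 * ((n:ℝ)*p) * (∫ a, S a ∂ℙ) + ((n:ℝ)*p)^2 := by
        rw [integral_add hI1 (integrable_const _),
          integral_sub hS2 hI2, integral_const_mul, integral_const]
        simp
      rw [e1, hES]
      have hv : variance S ℙ = (∫ a, S a ^ 2 ∂ℙ) - (∫ a, S a ∂ℙ) ^ 2 := by
        rw [variance_eq_sub hSmem]; rfl
      rw [hv, hES]
      ring
    rw [h1]; exact h2
  have hvarZ : variance Z ℙ ≤ 1 / (4 * n) := by
    have h1 : variance Z ℙ = (1/n)^2 * variance S ℙ := by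
      rw [hZeq]
      have := variance_const_mul (-(1/n)) (fun ω => S ω - n * p) ℙ
      rw [this, hvarW]; ring
    rw [h1]
    have hn0 : (0:ℝ) < n := Nat.cast_pos.mpr hn
    calc (1/(n:ℝ))^2 * variance S ℙ ≤ (1/(n:ℝ))^2 * ((n:ℝ) * (1/4)) :=
          mul_le_mul_of_nonneg_left hvarS (by positivity)
      _ = 1 / (4*(n:ℝ)) := by field_simp
  -- E|Z| ≤ sqrt(E Z^2)
  have habs_mem : MemLp (fun ω => |Z ω|) 2 ℙ := by
    have := hZmem.abs
    simpa [Pi.abs_def] using this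
  have hsq : (∫ ω, |Z ω| ∂ℙ) ^ 2 ≤ ∫ ω, Z ω ^ 2 ∂ℙ := by
    have hv := variance_nonneg (fun ω => |Z ω|) ℙ
    rw [variance_eq_sub habs_mem] at hv
    have h1 : (∫ ω, ((fun ω => |Z ω|) ^ 2) ω ∂ℙ) = ∫ ω, Z ω ^ 2 ∂ℙ := by
      apply integral_congr_ae; filter_upwards with ω; simp [Pi.pow_apply, sq_abs]
    rw [h1] at hv
    linarith
  have hintabs : (∫ ω, |Z ω| ∂ℙ) ≤ Real.sqrt (1 / (4 * n)) := by
    have h0 : (0:ℝ) ≤ ∫ ω, |Z ω| ∂ℙ := integral_nonneg (fun ω => abs_nonneg _)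
    rw [show (∫ ω, |Z ω| ∂ℙ) = Real.sqrt ((∫ ω, |Z ω| ∂ℙ)^2) from (Real.sqrt_sq h0).symm]
    apply Real.sqrt_le_sqrt
    calc (∫ ω, |Z ω| ∂ℙ) ^ 2 ≤ ∫ ω, Z ω ^ 2 ∂ℙ := hsq
      _ = variance Z ℙ := hEZ2
      _ ≤ 1 / (4 * n) := hvarZ
  calc (∫ ω, |p - (∑ i, if X i ω ≤ x then (1 : ℝ) else 0) / n| ∂ℙ)
      = ∫ ω, |Z ω| ∂ℙ := by apply integral_congr_ae; filter_upwards with ω; simp [hZdef, hSdef, hYdef]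
    _ ≤ Real.sqrt (1 / (4 * n)) := hintabs

/-- For `X₁,…,Xₙ` i.i.d. with CDF `F`, empirical CDF `Fₙ`, and any probability measure `μ`,
`E[∫ |F − Fₙ| dμ] ≤ √(π/(2n))`, and consequently some realization satisfies
`∫ |F − Fₙ| dμ ≤ √(π/(2n))`. -/
theorem expected_L1_deviation_le_and_exists
    {Ω : Type*} [MeasureSpace Ω] [IsProbabilityMeasure (ℙ : Measure Ω)]
    (n : ℕ) (hn : 0 < n)
    (X : Fin n → Ω → ℝ)
    (hmeas : ∀ i, Measurable (X i))
    (ν : Measure ℝ) [IsProbabilityMeasure ν]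
    (hid : ∀ i, Measure.map (X i) ℙ = ν)
    (hindep : iIndepFun X ℙ)
    (F : ℝ → ℝ) (hF : ∀ x, F x = (ν (Set.Iic x)).toReal)
    (μ : Measure ℝ) [IsProbabilityMeasure μ] :
    (∫ ω, (∫ x, |F x - (∑ i, if X i ω ≤ x then (1 : ℝ) else 0) / n| ∂μ) ∂ℙ)
        ≤ Real.sqrt (π / (2 * n))
    ∧ ∃ ω : Ω, (∫ x, |F x - (∑ i, if X i ω ≤ x then (1 : ℝ) else 0) / n| ∂μ)
        ≤ Real.sqrt (π / (2 * n)) := by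
  have hn' : (0:ℝ) < n := Nat.cast_pos.mpr hn
  set f : Ω → ℝ → ℝ := fun ω x => |F x - (∑ i, if X i ω ≤ x then (1 : ℝ) else 0) / n|
    with hfdef
  -- joint measurability
  have hFmono : Monotone F := by
    intro a b hab
    rw [hF a, hF b]
    exact ENNReal.toReal_mono (measure_ne_top ν _) (measure_mono (Set.Iic_subset_Iic.mpr hab))
  have hFmeas : Measurable F := hFmono.measurable
  have hmeas_unc : Measurable (Function.uncurry f) := by
    apply Measurable.abs
    apply Measurable.sub
    · exact hFmeas.comp measurable_snd
    · apply Measurable.div_const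
      apply Finset.measurable_sum
      intro i _
      exact Measurable.ite
        (measurableSet_le ((hmeas i).comp measurable_fst) measurable_snd)
        measurable_const measurable_const
  -- boundedness
  have hbound : ∀ ω x, |f ω x| ≤ 2 := by
    intro ω x
    have hF01 : F x ∈ Set.Icc (0:ℝ) 1 := by
      rw [hF x]
      constructor
      · exact ENNReal.toReal_nonneg
      · exact ENNReal.toReal_le_of_le_ofReal zero_le_one (by simpa using prob_le_one)
    have hsum : (∑ i, if X i ω ≤ x then (1 : ℝ) else 0) ∈ Set.Icc (0:ℝ) (n:ℝ) := by
      constructor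
      · exact Finset.sum_nonneg (fun i _ => by positivity)
      · calc (∑ i, if X i ω ≤ x then (1 : ℝ) else 0) ≤ ∑ _i : Fin n, (1:ℝ) :=
              Finset.sum_le_sum (fun i _ => by split <;> norm_num)
          _ = n := by simp
    have h2 : (∑ i, if X i ω ≤ x then (1 : ℝ) else 0) / n ∈ Set.Icc (0:ℝ) 1 := by
      constructor
      · exact div_nonneg hsum.1 hn'.le
      · rw [div_le_one hn']; exact hsum.2
    rw [abs_abs]
    have := abs_sub_abs_le_abs_sub (F x) ((∑ i, if X i ω ≤ x then (1 : ℝ) else 0) / n)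
    calc |F x - (∑ i, if X i ω ≤ x then (1 : ℝ) else 0) / n|
        ≤ |F x| + |(∑ i, if X i ω ≤ x then (1 : ℝ) else 0) / n| := abs_sub _ _
      _ ≤ 1 + 1 := by
          apply add_le_add
          · rw [abs_le]; exact ⟨by linarith [hF01.1], hF01.2⟩
          · rw [abs_le]; exact ⟨by linarith [h2.1], h2.2⟩
      _ = 2 := by norm_num
  have hint : Integrable (Function.uncurry f) ((ℙ : Measure Ω).prod μ) := by
    apply (integrable_const (2:ℝ)).mono' hmeas_unc.aestronglyMeasurable
    filter_upwards with q
    rw [Real.norm_eq_abs]; exact hbound q.1 q.2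
  -- pointwise bound in x
  have hkey : ∀ x : ℝ, (∫ ω, f ω x ∂ℙ) ≤ Real.sqrt (1 / (4 * n)) := by
    intro x
    have := pointwise_L1_bound n hn X hmeas ν hid hindep x
    simpa [hfdef, hF x] using this
  -- compare the two sqrt bounds
  have hsqrt_le : Real.sqrt (1 / (4 * n)) ≤ Real.sqrt (π / (2 * n)) := by
    apply Real.sqrt_le_sqrt
    rw [div_le_div_iff₀ (by positivity) (by positivity)]
    nlinarith [Real.pi_gt_three, hn']
  -- Fubini
  have hswap : (∫ ω, (∫ x, f ω x ∂μ) ∂ℙ) = ∫ x, (∫ ω, f ω x ∂ℙ) ∂μ :=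
    integral_integral_swap hint
  have hmain : (∫ ω, (∫ x, f ω x ∂μ) ∂ℙ) ≤ Real.sqrt (π / (2 * n)) := by
    rw [hswap]
    calc (∫ x, (∫ ω, f ω x ∂ℙ) ∂μ) ≤ ∫ _x, Real.sqrt (1 / (4 * n)) ∂μ := by
          apply integral_mono_of_nonneg
          · filter_upwards with x
            exact integral_nonneg (fun ω => abs_nonneg _)
          · exact integrable_const _
          · filter_upwards with x using hkey x
      _ = Real.sqrt (1 / (4 * n)) := by simp
      _ ≤ Real.sqrt (π / (2 * n)) := hsqrt_le
  refine ⟨hmain, ?_⟩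
  have hgint : Integrable (fun ω => ∫ x, f ω x ∂μ) ℙ := hint.integral_prod_left
  obtain ⟨ω, hω⟩ := exists_le_integral hgint
  exact ⟨ω, hω.trans hmain⟩
end

section
/- Let I ⊆ ℝ be a finite interval, J ⊆ I measurable with μ(J) > 0, where dμ = f dq for a density f with 0 < c ≤ f(q) ≤ C on I. Suppose F : I → ℝ satisfies c|q − q₀| ≤ |F(q) − F(q₀)| ≤ C|q − q₀| for some q₀ ∈ I and all q ∈ I. Then m = ∫_J |F(q) − F(q₀)| dμ ≥ (c²/(4C²))·μ(J)², and s = ∫_J |F(q) − F(q₀)|² dμ ≤ (C³/(3c³))·μ(I)³. -/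
open MeasureTheory

lemma my_intOn {g : ℝ → ℝ} (hg : Measurable g) {S : Set ℝ} (hS : MeasurableSet S)
    (hfin : volume S < ⊤) {M : ℝ} (hM : ∀ q ∈ S, |g q| ≤ M) :
    IntegrableOn g S := by
  refine Integrable.mono' (g := fun _ => M) (integrableOn_const hfin.ne)
    hg.aestronglyMeasurable ?_
  exact (ae_restrict_iff' hS).mpr (ae_of_all _ hM)

lemma abs_int (t : ℝ) (ht : 0 ≤ t) : (∫ x in (-t)..t, |x|) = t ^ 2 := by
  have h1 : (∫ x in (0:ℝ)..t, |x|) = t ^ 2 / 2 := by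
    rw [intervalIntegral.integral_congr (g := fun x => x) ?_, integral_id]
    · ring
    · intro x hx
      rw [Set.uIcc_of_le ht] at hx
      exact abs_of_nonneg hx.1
  have h2 : (∫ x in (-t)..(0:ℝ), |x|) = t ^ 2 / 2 := by
    have := intervalIntegral.integral_comp_neg (a := (0:ℝ)) (b := t) (fun x => |x|)
    simp only [neg_zero, abs_neg] at this
    rw [← this, h1]
  have hadd := intervalIntegral.integral_add_adjacent_intervals
    (a := -t) (b := 0) (c := t) (f := fun x => |x|) (μ := volume)
    (continuous_abs.intervalIntegrable _ _) (continuous_abs.intervalIntegrable _ _)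
  rw [← hadd, h1, h2]; ring

lemma bathtub (J : Set ℝ) (hJ : MeasurableSet J) (q₀ t : ℝ) (ht : 0 ≤ t)
    (hfin : volume J < ⊤) (hvol : (volume J).toReal = 2 * t)
    (hIJ : IntegrableOn (fun q => |q - q₀|) J) :
    t ^ 2 ≤ ∫ q in J, |q - q₀| := by
  set B := Set.Icc (q₀ - t) (q₀ + t) with hB
  have hBmeas : MeasurableSet B := measurableSet_Icc
  have hBvol : volume B = ENNReal.ofReal (2 * t) := by
    rw [hB, Real.volume_Icc]; ring_nf
  have hgmeas : Measurable fun q : ℝ => |q - q₀| :=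
    (continuous_abs.comp (continuous_id.sub continuous_const)).measurable
  have hBfin : volume B < ⊤ := by rw [hBvol]; exact ENNReal.ofReal_lt_top
  have hBptwise : ∀ q ∈ B, |q - q₀| ≤ t := by
    intro q hq
    rw [abs_sub_le_iff]
    constructor
    · linarith [hq.2]
    · linarith [hq.1]
  have hIB : IntegrableOn (fun q => |q - q₀|) B := by
    refine my_intOn hgmeas hBmeas hBfin (M := t) ?_
    intro q hq; rw [abs_abs]; exact hBptwise q hq
  -- splitting
  have key1 : (∫ q in J ∩ B, |q - q₀|) + ∫ q in J \ B, |q - q₀| = ∫ q in J, |q - q₀| :=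
    integral_inter_add_diff hBmeas hIJ
  have key2 : (∫ q in B ∩ J, |q - q₀|) + ∫ q in B \ J, |q - q₀| = ∫ q in B, |q - q₀| :=
    integral_inter_add_diff hJ hIB
  -- measure bookkeeping
  set x := (volume (J ∩ B)).toReal with hx
  have hmJ : volume (J \ B) + volume (J ∩ B) = volume J := measure_diff_add_inter J hBmeas
  have hmB : volume (B \ J) + volume (B ∩ J) = volume B := measure_diff_add_inter B hJ
  have hfin1 : volume (J \ B) < ⊤ := lt_of_le_of_lt (measure_mono Set.diff_subset) hfin
  have hfin2 : volume (B \ J) < ⊤ := lt_of_le_of_lt (measure_mono Set.diff_subset) hBfin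
  have hfin3 : volume (J ∩ B) < ⊤ := lt_of_le_of_lt (measure_mono Set.inter_subset_left) hfin
  have hcomm : volume (B ∩ J) = volume (J ∩ B) := by rw [Set.inter_comm]
  have hd1 : (volume (J \ B)).toReal = 2 * t - x := by
    have := congrArg ENNReal.toReal hmJ
    rw [ENNReal.toReal_add hfin1.ne hfin3.ne, hvol] at this
    linarith
  have hd2 : (volume (B \ J)).toReal = 2 * t - x := by
    have := congrArg ENNReal.toReal hmB
    rw [ENNReal.toReal_add hfin2.ne (hcomm ▸ hfin3).ne, hcomm, hBvol,
      ENNReal.toReal_ofReal (by linarith)] at this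
    linarith
  -- bound the two side pieces
  have hlow2 : t * (2 * t - x) ≤ ∫ q in J \ B, |q - q₀| := by
    have : (∫ _ in J \ B, t) ≤ ∫ q in J \ B, |q - q₀| := by
      refine setIntegral_mono_on (integrableOn_const hfin1.ne)
        (hIJ.mono_set Set.diff_subset) (hJ.diff hBmeas) ?_
      intro q hq
      by_contra hcon
      push_neg at hcon
      exact hq.2 (Set.mem_Icc.mpr ⟨by cases abs_sub_lt_iff.mp hcon with
        | intro h1 h2 => linarith, by cases abs_sub_lt_iff.mp hcon with
        | intro h1 h2 => linarith⟩)
    rwa [setIntegral_const, smul_eq_mul, measureReal_def, hd1, mul_comm] at this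
  have hup2 : (∫ q in B \ J, |q - q₀|) ≤ t * (2 * t - x) := by
    have : (∫ q in B \ J, |q - q₀|) ≤ ∫ _ in B \ J, t := by
      refine setIntegral_mono_on (hIB.mono_set Set.diff_subset)
        (integrableOn_const hfin2.ne) (hBmeas.diff hJ) ?_
      intro q hq; exact hBptwise q hq.1
    rwa [setIntegral_const, smul_eq_mul, measureReal_def, hd2, mul_comm] at this
  -- compute ∫_B
  have hBint : (∫ q in B, |q - q₀|) = t ^ 2 := by
    rw [hB, MeasureTheory.integral_Icc_eq_integral_Ioc,
      ← intervalIntegral.integral_of_le (by linarith : q₀ - t ≤ q₀ + t),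
      intervalIntegral.integral_comp_sub_right (fun x => |x|) q₀]
    have e1 : q₀ - t - q₀ = -t := by ring
    have e2 : q₀ + t - q₀ = t := by ring
    rw [e1, e2, abs_int t ht]
  have hinter : (∫ q in B ∩ J, |q - q₀|) = ∫ q in J ∩ B, |q - q₀| := by
    rw [Set.inter_comm]
  linarith

set_option maxHeartbeats 1000000 in
/-- Moment bounds under a bi-Lipschitz condition: for a finite interval `I = [a,b]`,
a measurable `J ⊆ I` of positive mass under `dμ = f dq` with `0 < c ≤ f ≤ C` on `I`,
and `F` satisfying `c|q−q₀| ≤ |F q − F q₀| ≤ C|q−q₀|` on `I`, the first moment of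
`|F − F q₀|` over `J` is at least `(c²/(4C²)) μ(J)²` and the second moment over `J`
is at most `(C³/(3c³)) μ(I)³`. -/
theorem moment_bounds_bi_lipschitz
    (a b : ℝ) (hab : a ≤ b)
    (J : Set ℝ) (hJmeas : MeasurableSet J) (hJI : J ⊆ Set.Icc a b)
    (f : ℝ → ℝ) (hfmeas : Measurable f)
    (c C : ℝ) (hc : 0 < c)
    (hfc : ∀ q ∈ Set.Icc a b, c ≤ f q) (hfC : ∀ q ∈ Set.Icc a b, f q ≤ C)
    (hJpos : 0 < ∫ q in J, f q)
    (F : ℝ → ℝ) (hFmeas : Measurable F)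
    (q₀ : ℝ) (hq₀ : q₀ ∈ Set.Icc a b)
    (hlow : ∀ q ∈ Set.Icc a b, c * |q - q₀| ≤ |F q - F q₀|)
    (hup : ∀ q ∈ Set.Icc a b, |F q - F q₀| ≤ C * |q - q₀|) :
    (c ^ 2 / (4 * C ^ 2)) * (∫ q in J, f q) ^ 2 ≤ ∫ q in J, |F q - F q₀| * f q
    ∧ (∫ q in J, |F q - F q₀| ^ 2 * f q)
        ≤ (C ^ 3 / (3 * c ^ 3)) * (∫ q in Set.Icc a b, f q) ^ 3 := by
  obtain ⟨ha₀, hb₀⟩ := hq₀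
  set I := Set.Icc a b with hI
  have hIfin : volume I < ⊤ := by
    rw [hI, Real.volume_Icc]; exact ENNReal.ofReal_lt_top
  have hJfin : volume J < ⊤ := lt_of_le_of_lt (measure_mono hJI) hIfin
  have hqd : ∀ q ∈ I, |q - q₀| ≤ b - a := by
    intro q hq
    rw [abs_sub_le_iff]
    exact ⟨by linarith [hq.2], by linarith [hq.1]⟩
  have hfb : ∀ q ∈ I, |f q| ≤ C := by
    intro q hq
    rw [abs_of_nonneg (by linarith [hfc q hq])]
    exact hfC q hq
  have hfIint : IntegrableOn f I := my_intOn hfmeas measurableSet_Icc hIfin hfb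
  have hfJint : IntegrableOn f J := my_intOn hfmeas hJmeas hJfin (fun q hq => hfb q (hJI hq))
  set μJ := ∫ q in J, f q with hμJ
  set lJ := (volume J).toReal with hlJ
  have hlnn : 0 ≤ lJ := ENNReal.toReal_nonneg
  have hμJle : μJ ≤ C * lJ := by
    have h := setIntegral_mono_on hfJint (integrableOn_const hJfin.ne) hJmeas
      (fun q hq => hfC q (hJI hq))
    rwa [setIntegral_const, smul_eq_mul, measureReal_def, mul_comm] at h
  have hC : 0 < C := by nlinarith
  set t := lJ / 2 with htdef
  have ht : 0 ≤ t := by positivity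
  have hgmeas : Measurable fun q : ℝ => |q - q₀| :=
    (continuous_abs.comp (continuous_id.sub continuous_const)).measurable
  have hIJabs : IntegrableOn (fun q => |q - q₀|) J := by
    refine my_intOn hgmeas hJmeas hJfin (M := b - a) ?_
    intro q hq; rw [abs_abs]; exact hqd q (hJI hq)
  have hbath : t ^ 2 ≤ ∫ q in J, |q - q₀| :=
    bathtub J hJmeas q₀ t ht hJfin (by rw [← hlJ]; ring) hIJabs
  constructor
  · -- first moment
    have hRint : IntegrableOn (fun q => |F q - F q₀| * f q) J := by
      refine my_intOn ((hFmeas.sub measurable_const).abs.mul hfmeas) hJmeas hJfin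
        (M := (C * (b - a)) * C) ?_
      intro q hq
      show |(|F q - F q₀| * f q)| ≤ C * (b - a) * C
      rw [abs_mul, abs_abs]
      have h1 : |F q - F q₀| ≤ C * (b - a) :=
        le_trans (hup q (hJI hq)) (by
          have := hqd q (hJI hq)
          nlinarith [abs_nonneg (q - q₀)])
      exact mul_le_mul h1 (hfb q (hJI hq)) (abs_nonneg _) (mul_nonneg hC.le (by linarith))
    have step1 : (∫ q in J, (c * c) * |q - q₀|) ≤ ∫ q in J, |F q - F q₀| * f q := by
      refine setIntegral_mono_on (hIJabs.const_mul _) hRint hJmeas ?_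
      intro q hq
      have h1 := hlow q (hJI hq)
      have h2 := hfc q (hJI hq)
      nlinarith [abs_nonneg (q - q₀), abs_nonneg (F q - F q₀)]
    have step2 : (∫ q in J, (c * c) * |q - q₀|) = (c * c) * ∫ q in J, |q - q₀| :=
      integral_const_mul _ _
    have key : (c * c) * t ^ 2 ≤ ∫ q in J, |F q - F q₀| * f q := by
      rw [← step2] at *
      calc (c * c) * t ^ 2 ≤ (c*c) * ∫ q in J, |q - q₀| := by nlinarith
        _ = ∫ q in J, (c * c) * |q - q₀| := (integral_const_mul _ _).symm
        _ ≤ _ := step1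
    have hfinal : (c ^ 2 / (4 * C ^ 2)) * μJ ^ 2 ≤ (c * c) * t ^ 2 := by
      rw [div_mul_eq_mul_div, div_le_iff₀ (by positivity)]
      have h2 : μJ ≤ C * (2 * t) := by rw [htdef]; nlinarith
      nlinarith [mul_le_mul h2 h2 hJpos.le (by positivity : (0:ℝ) ≤ C * (2 * t)),
        sq_nonneg c]
    exact le_trans hfinal key
  · -- second moment
    set G := fun q => |F q - F q₀| ^ 2 * f q with hG
    have hGmeas : Measurable G := ((hFmeas.sub measurable_const).abs.pow_const 2).mul hfmeas
    have hGbound : ∀ q ∈ I, |G q| ≤ (C * (b - a)) ^ 2 * C := by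
      intro q hq
      rw [hG, abs_mul, abs_pow, abs_abs]
      have h1 : |F q - F q₀| ≤ C * (b - a) :=
        le_trans (hup q hq) (by have := hqd q hq; nlinarith [abs_nonneg (q - q₀)])
      exact mul_le_mul (by nlinarith [abs_nonneg (F q - F q₀)]) (hfb q hq)
        (abs_nonneg _) (by positivity)
    have hGI : IntegrableOn G I := my_intOn hGmeas measurableSet_Icc hIfin hGbound
    have step3 : (∫ q in J, G q) ≤ ∫ q in I, G q := by
      refine setIntegral_mono_set hGI ?_ (HasSubset.Subset.eventuallyLE hJI)
      refine (ae_restrict_iff' measurableSet_Icc).mpr (ae_of_all _ ?_)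
      intro q hq
      have h0 : 0 ≤ f q := by linarith [hfc q hq]
      show (0:ℝ) ≤ |F q - F q₀| ^ 2 * f q
      positivity
    have hpolyint : IntegrableOn (fun q => C ^ 3 * (q - q₀) ^ 2) I := by
      exact (continuous_const.mul ((continuous_id.sub continuous_const).pow 2)).integrableOn_Icc
    have step4 : (∫ q in I, G q) ≤ ∫ q in I, C ^ 3 * (q - q₀) ^ 2 := by
      refine setIntegral_mono_on hGI hpolyint measurableSet_Icc ?_
      intro q hq
      show |F q - F q₀| ^ 2 * f q ≤ C ^ 3 * (q - q₀) ^ 2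
      have h1 : |F q - F q₀| ≤ C * |q - q₀| := hup q hq
      have h2 : f q ≤ C := hfC q hq
      have h3 : c ≤ f q := hfc q hq
      have h4 : |F q - F q₀| ^ 2 ≤ C ^ 2 * (q - q₀) ^ 2 := by
        nlinarith [abs_nonneg (F q - F q₀), abs_nonneg (q - q₀), sq_abs (q - q₀)]
      nlinarith [sq_nonneg (q - q₀), sq_nonneg (F q - F q₀), sq_abs (F q - F q₀)]
    have step5 : (∫ q in I, C ^ 3 * (q - q₀) ^ 2)
        = C ^ 3 * (((b - q₀) ^ 3 - (a - q₀) ^ 3) / 3) := by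
      rw [integral_const_mul]
      congr 1
      rw [hI, MeasureTheory.integral_Icc_eq_integral_Ioc,
        ← intervalIntegral.integral_of_le hab,
        intervalIntegral.integral_comp_sub_right (fun x => x ^ 2) q₀,
        integral_pow]
      norm_num
    set μI := ∫ q in I, f q with hμI
    have step6 : c * (b - a) ≤ μI := by
      have h := setIntegral_mono_on (integrableOn_const hIfin.ne) hfIint
        measurableSet_Icc (fun q hq => hfc q hq)
      rw [setIntegral_const, smul_eq_mul, measureReal_def, hI, Real.volume_Icc,
        ENNReal.toReal_ofReal (by linarith)] at h
      have he : μI = ∫ x in Set.Icc a b, f x := by rw [hμI, hI]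
      linarith
    have hfinal2 : C ^ 3 * (((b - q₀) ^ 3 - (a - q₀) ^ 3) / 3)
        ≤ (C ^ 3 / (3 * c ^ 3)) * μI ^ 3 := by
      set u := b - q₀ with hu
      set v := q₀ - a with hv
      have hu0 : 0 ≤ u := by rw [hu]; linarith
      have hv0 : 0 ≤ v := by rw [hv]; linarith
      have hμInn : 0 ≤ μI := le_trans (mul_nonneg hc.le (by linarith)) step6
      have hcube : (c * (u + v)) ^ 3 ≤ μI ^ 3 := by
        refine pow_le_pow_left₀ (by positivity) ?_ 3
        have : u + v = b - a := by rw [hu, hv]; ring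
        rw [this]; exact step6
      have hsum : u ^ 3 + v ^ 3 ≤ (u + v) ^ 3 := by
        nlinarith [mul_nonneg (mul_nonneg hu0 hu0) hv0, mul_nonneg (mul_nonneg hu0 hv0) hv0]
      have hμ3 : c ^ 3 * (u ^ 3 + v ^ 3) ≤ μI ^ 3 :=
        calc c ^ 3 * (u ^ 3 + v ^ 3) ≤ c ^ 3 * (u + v) ^ 3 :=
              mul_le_mul_of_nonneg_left hsum (by positivity)
          _ = (c * (u + v)) ^ 3 := by ring
          _ ≤ μI ^ 3 := hcube
      have heq : (a - q₀) = -v := by rw [hv]; ring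
      rw [heq, div_mul_eq_mul_div, le_div_iff₀ (by positivity)]
      have hid : C ^ 3 * ((u ^ 3 - (-v) ^ 3) / 3) * (3 * c ^ 3)
          = C ^ 3 * (c ^ 3 * (u ^ 3 + v ^ 3)) := by ring
      rw [hid]
      exact mul_le_mul_of_nonneg_left hμ3 (pow_nonneg hC.le 3)
    calc (∫ q in J, |F q - F q₀| ^ 2 * f q) ≤ ∫ q in I, G q := step3
      _ ≤ ∫ q in I, C ^ 3 * (q - q₀) ^ 2 := step4
      _ = C ^ 3 * (((b - q₀) ^ 3 - (a - q₀) ^ 3) / 3) := step5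
      _ ≤ (C ^ 3 / (3 * c ^ 3)) * μI ^ 3 := hfinal2
end

section
/- For any continuous strictly increasing CDF F with density f, the minimal L¹(F)-approximation error of F by piecewise constant functions with K pieces equals 1/(4K): inf over partitions {Iₖ} of the domain into K intervals and constants cₖ of ∑ₖ ∫_{Iₖ} |F(q) − cₖ| f(q) dq = 1/(4K). -/
open MeasureTheory Set intervalIntegral

private lemma aux_abs_int (α β c : ℝ) (hab : α ≤ β) :
    (β - α)^2 / 4 ≤ ∫ u in α..β, |u - c| := by
  set m := (α + β) / 2 with hm
  have hαm : α ≤ m := by rw [hm]; linarith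
  have hmβ : m ≤ β := by rw [hm]; linarith
  have hint : ∀ x y : ℝ, IntervalIntegrable (fun u => |u - c|) volume x y := fun x y =>
    (continuous_abs.comp (continuous_id.sub continuous_const)).intervalIntegrable x y
  have hsplit : (∫ u in α..m, |u - c|) + ∫ u in m..β, |u - c| = ∫ u in α..β, |u - c| :=
    integral_add_adjacent_intervals (hint _ _) (hint _ _)
  have h1 : ∫ u in α..m, (c - u) ≤ ∫ u in α..m, |u - c| := by
    apply integral_mono_on hαm ((continuous_const.sub continuous_id).intervalIntegrable _ _)
      (hint _ _)
    intro x _; rw [abs_sub_comm]; exact le_abs_self _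
  have h2 : ∫ u in m..β, (u - c) ≤ ∫ u in m..β, |u - c| := by
    apply integral_mono_on hmβ ((continuous_id.sub continuous_const).intervalIntegrable _ _)
      (hint _ _)
    intro x _; exact le_abs_self _
  have e1 : ∫ u in α..m, (c - u) = c * (m - α) - (m^2 - α^2)/2 := by
    rw [integral_sub (intervalIntegrable_const) intervalIntegral.intervalIntegrable_id,
      intervalIntegral.integral_const, integral_id]
    simp [smul_eq_mul]; ring
  have e2 : ∫ u in m..β, (u - c) = (β^2 - m^2)/2 - c * (β - m) := by
    rw [integral_sub intervalIntegral.intervalIntegrable_id intervalIntegrable_const,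
      intervalIntegral.integral_const, integral_id]
    simp [smul_eq_mul]; ring
  have key : (c * (m - α) - (m^2 - α^2)/2) + ((β^2 - m^2)/2 - c * (β - m)) = (β - α)^2/4 := by
    rw [hm]; ring
  linarith

private lemma aux_abs_int_eq (α β : ℝ) (hab : α ≤ β) :
    ∫ u in α..β, |u - (α + β)/2| = (β - α)^2 / 4 := by
  set m := (α + β) / 2 with hm
  have hαm : α ≤ m := by rw [hm]; linarith
  have hmβ : m ≤ β := by rw [hm]; linarith
  have hint : ∀ x y : ℝ, IntervalIntegrable (fun u => |u - m|) volume x y := fun x y =>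
    (continuous_abs.comp (continuous_id.sub continuous_const)).intervalIntegrable x y
  have hsplit : (∫ u in α..m, |u - m|) + ∫ u in m..β, |u - m| = ∫ u in α..β, |u - m| :=
    integral_add_adjacent_intervals (hint _ _) (hint _ _)
  have h1 : ∫ u in α..m, |u - m| = ∫ u in α..m, (m - u) := by
    apply integral_congr
    intro x hx
    rw [Set.uIcc_of_le hαm] at hx
    simp only
    rw [abs_of_nonpos (by linarith [hx.2, hx.1])]; ring
  have h2 : ∫ u in m..β, |u - m| = ∫ u in m..β, (u - m) := by
    apply integral_congr
    intro x hx
    rw [Set.uIcc_of_le hmβ] at hx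
    simp only
    rw [abs_of_nonneg (by linarith [hx.1, hx.2])]
  have e1 : ∫ u in α..m, (m - u) = m * (m - α) - (m^2 - α^2)/2 := by
    rw [integral_sub (intervalIntegrable_const) intervalIntegral.intervalIntegrable_id,
      intervalIntegral.integral_const, integral_id]
    simp [smul_eq_mul]; ring
  have e2 : ∫ u in m..β, (u - m) = (β^2 - m^2)/2 - m * (β - m) := by
    rw [integral_sub intervalIntegral.intervalIntegrable_id intervalIntegrable_const,
      intervalIntegral.integral_const, integral_id]
    simp [smul_eq_mul]; ring
  rw [← hsplit, h1, h2, e1, e2, hm]; ring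

private lemma aux_f_nonneg {a b : ℝ} {F f : ℝ → ℝ}
    (hFmono : StrictMonoOn F (Set.Icc a b))
    (hderiv : ∀ x ∈ Set.Icc a b, HasDerivAt F (f x) x) :
    ∀ x ∈ Set.Ioo a b, 0 ≤ f x := by
  intro x hx
  have hd := hderiv x (Set.Ioo_subset_Icc_self hx)
  have ht : Filter.Tendsto (slope F x) (nhdsWithin x (Set.Ioi x)) (nhds (f x)) :=
    (hasDerivAt_iff_tendsto_slope.mp hd).mono_left
      (nhdsWithin_mono _ fun y hy => ne_of_gt hy)
  refine ge_of_tendsto ht ?_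
  filter_upwards [Ioo_mem_nhdsGT_of_mem (Set.mem_Ico.mpr ⟨le_refl x, hx.2⟩)] with y hy
  have hFle : F x ≤ F y := hFmono.monotoneOn (Set.Ioo_subset_Icc_self hx)
    ⟨le_of_lt (hx.1.trans hy.1), hy.2.le⟩ hy.1.le
  rw [slope_def_field]
  exact div_nonneg (by linarith) (by linarith [hy.1])

private lemma aux_subst {a b : ℝ} {F f : ℝ → ℝ}
    (hFcont : ContinuousOn F (Set.Icc a b))
    (hderiv : ∀ x ∈ Set.Icc a b, HasDerivAt F (f x) x)
    (hfint : IntegrableOn f (Set.Ioc a b))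
    (s t : ℝ) (has : a ≤ s) (hst : s ≤ t) (htb : t ≤ b) (c : ℝ) :
    ∫ q in Set.Ioc s t, |F q - c| * f q = ∫ u in (F s)..(F t), |u - c| := by
  have hsub : Set.Icc s t ⊆ Set.Icc a b := Set.Icc_subset_Icc has htb
  have huIcc : Set.uIcc s t = Set.Icc s t := Set.uIcc_of_le hst
  have hgc : Continuous fun u : ℝ => |u - c| :=
    continuous_abs.comp (continuous_id.sub continuous_const)
  have hfIcc : IntegrableOn f (Set.Icc s t) := by
    rw [integrableOn_Icc_iff_integrableOn_Ioc]
    exact hfint.mono_set (Set.Ioc_subset_Ioc has htb)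
  have h1 : ∫ q in Set.Ioc s t, |F q - c| * f q
      = ∫ q in s..t, f q • (fun u : ℝ => |u - c|) (F q) := by
    rw [intervalIntegral.integral_of_le hst]
    simp only [smul_eq_mul]
    exact setIntegral_congr_fun measurableSet_Ioc (fun x _ => mul_comm _ _)
  rw [h1]
  have := intervalIntegral.integral_comp_smul_deriv''' (f := F) (f' := f)
    (g := fun u : ℝ => |u - c|) (a := s) (b := t)
    (by rw [huIcc]; exact hFcont.mono hsub)
    (by
      intro x hx
      rw [min_eq_left hst, max_eq_right hst] at hx
      exact (hderiv x (hsub (Set.Ioo_subset_Icc_self hx))).hasDerivWithinAt)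
    (hgc.continuousOn)
    (by
      apply hgc.continuousOn.integrableOn_compact
      rw [huIcc]
      exact (isCompact_Icc.image_of_continuousOn (hFcont.mono hsub)))
    (by
      rw [huIcc]
      have : IntegrableOn (fun x => |F x - c| * f x) (Set.Icc s t) :=
        IntegrableOn.continuousOn_mul
          (hgc.comp_continuousOn (hFcont.mono hsub)) hfIcc isCompact_Icc
      apply this.congr_fun (fun x _ => ?_) measurableSet_Icc
      simp [smul_eq_mul, mul_comm])
  simpa [Function.comp] using this

/-- For a continuous strictly increasing CDF `F` on `[a,b]` with density `f`, the
minimal `L¹(F)`-approximation error of `F` by piecewise constant functions with `K`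
pieces equals `1/(4K)`:
`inf { ∑ₖ ∫_{Iₖ} |F − cₖ| f dq } = 1/(4K)`, the infimum over partitions `{Iₖ}` of
`[a,b]` into `K` intervals and constants `cₖ`. -/
theorem min_piecewise_constant_approx_error
    (a b : ℝ) (hab : a < b)
    (F f : ℝ → ℝ)
    (hFcont : ContinuousOn F (Set.Icc a b))
    (hFmono : StrictMonoOn F (Set.Icc a b))
    (hFa : F a = 0) (hFb : F b = 1)
    (hderiv : ∀ x ∈ Set.Icc a b, HasDerivAt F (f x) x)
    (K : ℕ) (hK : 1 ≤ K) :
    sInf {e : ℝ | ∃ (t : Fin (K + 1) → ℝ) (c : Fin K → ℝ),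
        Monotone t ∧ t 0 = a ∧ t (Fin.last K) = b ∧
        e = ∑ k : Fin K, ∫ q in Set.Ioc (t k.castSucc) (t k.succ), |F q - c k| * f q}
      = 1 / (4 * K) := by
  have hK0 : (0:ℝ) < K := by exact_mod_cast Nat.pos_of_ne_zero (by omega)
  have hf0 := aux_f_nonneg hFmono hderiv
  have hfint : IntegrableOn f (Set.Ioc a b) :=
    integrableOn_deriv_of_nonneg hFcont (fun x hx => hderiv x (Set.Ioo_subset_Icc_self hx)) hf0
  apply IsLeast.csInf_eq
  constructor
  · -- the infimum is attained at the quantiles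
    have hsurj : ∀ y ∈ Set.Icc (0:ℝ) 1, ∃ x, x ∈ Set.Icc a b ∧ F x = y := by
      intro y hy
      have h := intermediate_value_Icc hab.le hFcont
      rw [hFa, hFb] at h
      obtain ⟨x, hx, hFx⟩ := h hy
      exact ⟨x, hx, hFx⟩
    choose g hg1 hg2 using hsurj
    set t : Fin (K+1) → ℝ := fun k => g ((k.val : ℝ)/K)
      ⟨by positivity, by rw [div_le_one hK0]; exact_mod_cast k.is_le⟩ with ht
    have hFt : ∀ k, F (t k) = (k.val : ℝ)/K := fun k => hg2 _ _
    have htmem : ∀ k, t k ∈ Set.Icc a b := fun k => hg1 _ _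
    have htmono : Monotone t := by
      intro k l hkl
      have h : F (t k) ≤ F (t l) := by
        rw [hFt, hFt]
        gcongr
        exact_mod_cast hkl
      exact (hFmono.le_iff_le (htmem k) (htmem l)).mp h
    have ht0 : t 0 = a := by
      apply hFmono.injOn (htmem 0) ⟨le_refl a, hab.le⟩
      rw [hFt, hFa]; simp
    have htlast : t (Fin.last K) = b := by
      apply hFmono.injOn (htmem _) ⟨hab.le, le_refl b⟩
      rw [hFt, hFb]; simp [Fin.val_last, div_self (ne_of_gt hK0)]
    refine ⟨t, fun k => ((k.val:ℝ)/K + ((k.val:ℝ)+1)/K)/2, htmono, ht0, htlast, ?_⟩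
    have hterm : ∀ k : Fin K,
        (∫ q in Set.Ioc (t k.castSucc) (t k.succ),
          |F q - ((k.val:ℝ)/K + ((k.val:ℝ)+1)/K)/2| * f q) = 1/(4*(K:ℝ)^2) := by
      intro k
      rw [aux_subst hFcont hderiv hfint _ _ (htmem _).1
        (htmono (Fin.castSucc_lt_succ : k.castSucc < k.succ).le) (htmem _).2]
      rw [hFt, hFt]
      have hc1 : ((k.castSucc.val : ℝ)) = (k.val : ℝ) := by simp
      have hc2 : ((k.succ.val : ℝ)) = (k.val : ℝ) + 1 := by simp
      rw [hc1, hc2]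
      rw [aux_abs_int_eq ((k.val:ℝ)/K) (((k.val:ℝ)+1)/K) (by gcongr; linarith)]
      field_simp
      ring
    rw [Finset.sum_congr rfl (fun k _ => hterm k), Finset.sum_const, Finset.card_univ,
      Fintype.card_fin, nsmul_eq_mul]
    field_simp
  · rintro e ⟨t, c, htmono, ht0, htlast, rfl⟩
    have htmem : ∀ k, t k ∈ Set.Icc a b := fun k =>
      ⟨by rw [← ht0]; exact htmono (Fin.zero_le k),
       by rw [← htlast]; exact htmono (Fin.le_last k)⟩
    have hstep : ∀ k : Fin K, (F (t k.succ) - F (t k.castSucc))^2/4 ≤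
        ∫ q in Set.Ioc (t k.castSucc) (t k.succ), |F q - c k| * f q := by
      intro k
      rw [aux_subst hFcont hderiv hfint _ _ (htmem _).1
        (htmono (Fin.castSucc_lt_succ : k.castSucc < k.succ).le) (htmem _).2]
      exact aux_abs_int _ _ _ (hFmono.monotoneOn (htmem _) (htmem _)
        (htmono (Fin.castSucc_lt_succ : k.castSucc < k.succ).le))
    set Δ : Fin K → ℝ := fun k => F (t k.succ) - F (t k.castSucc) with hΔ
    have hsum1 : ∑ k : Fin K, Δ k = 1 := by
      set v : ℕ → ℝ := fun i => F (t ⟨min i K, Nat.lt_succ_of_le (min_le_right i K)⟩) with hv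
      have htel := Finset.sum_range_sub v K
      have heq : ∀ k : Fin K, Δ k = v (k.val + 1) - v k.val := by
        intro k
        have h1 : v (k.val + 1) = F (t k.succ) :=
          congrArg F (congrArg t (Fin.ext (by
            simp [Nat.min_eq_left (Nat.succ_le_of_lt k.isLt)])))
        have h2 : v k.val = F (t k.castSucc) :=
          congrArg F (congrArg t (Fin.ext (by
            simp [Nat.min_eq_left (le_of_lt k.isLt)])))
        rw [hΔ, h1, h2]
      rw [Finset.sum_congr rfl (fun k _ => heq k)]
      rw [Fin.sum_univ_eq_sum_range (fun i => v (i + 1) - v i) K, htel]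
      have hvK : v K = 1 := by
        have : (⟨min K K, Nat.lt_succ_of_le (min_le_right K K)⟩ : Fin (K+1)) = Fin.last K :=
          Fin.ext (by simp)
        rw [hv]; simp only; rw [this, htlast, hFb]
      have hv0 : v 0 = 0 := by
        have : (⟨min 0 K, Nat.lt_succ_of_le (min_le_right 0 K)⟩ : Fin (K+1)) = 0 :=
          Fin.ext (by simp)
        rw [hv]; simp only; rw [this, ht0, hFa]
      rw [hvK, hv0]; ring
    have hcs : (∑ k : Fin K, Δ k)^2 ≤ (K : ℝ) * ∑ k : Fin K, (Δ k)^2 := by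
      have h := sq_sum_le_card_mul_sum_sq (s := (Finset.univ : Finset (Fin K))) (f := Δ)
      simpa using h
    have hC : (1:ℝ) ≤ (K:ℝ) * ∑ k : Fin K, (Δ k)^2 := by
      rw [hsum1] at hcs; simpa using hcs
    have hA : (∑ k : Fin K, (Δ k)^2)/4 ≤
        ∑ k : Fin K, ∫ q in Set.Ioc (t k.castSucc) (t k.succ), |F q - c k| * f q := by
      rw [Finset.sum_div]
      exact Finset.sum_le_sum (fun k _ => hstep k)
    rw [div_le_iff₀ (by positivity)]
    nlinarith [hA, hC, hK0]
end

section
/- Adversarial staircase CDF: for M ∈ ℕ define F_M on [0,1] piecewise by F_M(x) = (1/M)·[M(x − i/M)]² + i/M for x ∈ [i/M, (i+1)/M], i = 0,…,M−1. Then F_M is a continuous, increasing function with F_M(0) = 0 and F_M(1) = 1 (hence a valid CDF), and for any affine function L, ∫_{i/M}^{(i+1)/M} |F_M(x) − L(x)| dx ≥ 1/(16M²). -/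
open MeasureTheory intervalIntegral

/-- The adversarial staircase function: on each interval `[i/M, (i+1)/M]` it equals
`(1/M)·[M(x − i/M)]² + i/M`, i.e. a rescaled copy of `x²`. -/
noncomputable def staircaseCDF (M : ℕ) (x : ℝ) : ℝ :=
  ((M : ℝ) * x - ⌊(M : ℝ) * x⌋) ^ 2 / M + (⌊(M : ℝ) * x⌋ : ℝ) / M

/-- Best affine `L¹` approximation of `u²` on `[0,1]` has error at least `1/16`. -/
lemma quad_affine_L1 (c d : ℝ) :
    (1:ℝ)/16 ≤ ∫ u in (0:ℝ)..1, |u^2 - (c*u + d)| := by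
  set h : ℝ → ℝ := fun u => u^2 - (c*u + d) with hh
  have hcont : Continuous h := by fun_prop
  have hder : ∀ x : ℝ, HasDerivAt (fun u => u^3/3 - (c*u^2/2 + d*u)) (h x) x := by
    intro x
    have h1 : HasDerivAt (fun u : ℝ => u^3/3) (x^2) x := by
      simpa using (hasDerivAt_pow 3 x).div_const 3
    have h2 : HasDerivAt (fun u : ℝ => c*u^2/2 + d*u) (c*x + d) x := by
      have h3 : HasDerivAt (fun u : ℝ => c*u^2/2) (c*x) x := by
        have := ((hasDerivAt_pow 2 x).const_mul c).div_const 2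
        exact this.congr_deriv (by norm_num; ring)
      have h4 : HasDerivAt (fun u : ℝ => d*u) d x := by
        simpa using (hasDerivAt_id x).const_mul d
      exact h3.add h4
    exact h1.sub h2
  have H : ∀ p q : ℝ, ∫ u in p..q, h u
      = (q^3/3 - (c*q^2/2 + d*q)) - (p^3/3 - (c*p^2/2 + d*p)) := fun p q =>
    integral_eq_sub_of_hasDerivAt (fun x _ => hder x) (hcont.intervalIntegrable p q)
  have habs : ∀ p q : ℝ, IntervalIntegrable (fun u => |h u|) volume p q :=
    fun p q => (hcont.abs).intervalIntegrable p q
  have A1 : ∫ u in (0:ℝ)..(1/4), h u ≤ ∫ u in (0:ℝ)..(1/4), |h u| :=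
    integral_mono_on (by norm_num) (hcont.intervalIntegrable _ _) (habs _ _)
      (fun x _ => le_abs_self _)
  have A2 : -∫ u in (1/4:ℝ)..(3/4), h u ≤ ∫ u in (1/4:ℝ)..(3/4), |h u| := by
    rw [← intervalIntegral.integral_neg]
    exact integral_mono_on (by norm_num) (hcont.neg.intervalIntegrable _ _) (habs _ _)
      (fun x _ => neg_le_abs _)
  have A3 : ∫ u in (3/4:ℝ)..1, h u ≤ ∫ u in (3/4:ℝ)..1, |h u| :=
    integral_mono_on (by norm_num) (hcont.intervalIntegrable _ _) (habs _ _)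
      (fun x _ => le_abs_self _)
  have hsplit : ∫ u in (0:ℝ)..1, |h u|
      = (∫ u in (0:ℝ)..(1/4), |h u|) + (∫ u in (1/4:ℝ)..(3/4), |h u|)
        + (∫ u in (3/4:ℝ)..1, |h u|) := by
    rw [integral_add_adjacent_intervals (habs 0 (1/4)) (habs (1/4) (3/4)),
        integral_add_adjacent_intervals (by
          exact (habs 0 (1/4)).trans (habs (1/4) (3/4))) (habs (3/4) 1)]
  have hval : (∫ u in (0:ℝ)..(1/4), h u) - (∫ u in (1/4:ℝ)..(3/4), h u)
      + (∫ u in (3/4:ℝ)..1, h u) = 1/16 := by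
    rw [H, H, H]; ring
  calc (1:ℝ)/16
      = (∫ u in (0:ℝ)..(1/4), h u) + (-∫ u in (1/4:ℝ)..(3/4), h u)
        + (∫ u in (3/4:ℝ)..1, h u) := by rw [← hval]; ring
    _ ≤ (∫ u in (0:ℝ)..(1/4), |h u|) + (∫ u in (1/4:ℝ)..(3/4), |h u|)
        + (∫ u in (3/4:ℝ)..1, |h u|) := by gcongr
    _ = ∫ u in (0:ℝ)..1, |h u| := hsplit.symm

/-- The staircase function `F_M` is a continuous increasing function on `[0,1]` with
`F_M 0 = 0` and `F_M 1 = 1` (hence a valid CDF), and on each subinterval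
`[i/M, (i+1)/M]` every affine function approximates it with `L¹` error at least
`1/(16M²)`. -/
theorem staircaseCDF_valid_and_adversarial (M : ℕ) (hM : 0 < M) :
    ContinuousOn (staircaseCDF M) (Set.Icc 0 1)
    ∧ MonotoneOn (staircaseCDF M) (Set.Icc 0 1)
    ∧ staircaseCDF M 0 = 0
    ∧ staircaseCDF M 1 = 1
    ∧ ∀ i : ℕ, i < M → ∀ a b : ℝ,
        1 / (16 * (M : ℝ) ^ 2)
          ≤ ∫ x in ((i : ℝ) / M)..(((i : ℝ) + 1) / M),
              |staircaseCDF M x - (a * x + b)| := by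
  have hM0 : (0:ℝ) < M := by exact_mod_cast hM
  have hMne : (M:ℝ) ≠ 0 := hM0.ne'
  set g : ℝ → ℝ := fun t => t + ((Int.fract t)^2 - Int.fract t) with hg
  have hfr : ∀ t : ℝ, Int.fract t = t - ⌊t⌋ := fun t => rfl
  have hg_eq : ∀ x, staircaseCDF M x = g ((M:ℝ)*x) / M := by
    intro x
    unfold staircaseCDF
    rw [hg]; simp only [hfr]; ring
  have hg2 : ∀ t : ℝ, g t = (⌊t⌋ : ℝ) + (Int.fract t)^2 := by
    intro t; rw [hg]; simp only [hfr]; ring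
  have hq : Continuous fun t : ℝ => (Int.fract t)^2 - Int.fract t := by
    have := ContinuousOn.comp_fract'' (f := fun y : ℝ => y^2 - y)
      (by fun_prop) (by norm_num)
    exact this
  have hgc : Continuous g := continuous_id.add hq
  have hsc : Continuous (staircaseCDF M) := by
    have : Continuous fun x : ℝ => g ((M:ℝ)*x) / M :=
      (hgc.comp (continuous_const.mul continuous_id)).div_const _
    simpa [← hg_eq] using this.congr (fun x => (hg_eq x).symm)
  have hg_mono : Monotone g := by
    intro s t hst
    by_cases hfl : ⌊s⌋ = ⌊t⌋
    · rw [hg2 s, hg2 t, hfl]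
      have h1 : Int.fract s ≤ Int.fract t := by
        rw [hfr, hfr, hfl]; linarith
      have := pow_le_pow_left₀ (Int.fract_nonneg s) h1 2
      linarith
    · have hlt : ⌊s⌋ < ⌊t⌋ := lt_of_le_of_ne (Int.floor_mono hst) hfl
      have hcast : (⌊s⌋:ℝ) + 1 ≤ (⌊t⌋:ℝ) := by exact_mod_cast hlt
      have h1 : (Int.fract s)^2 ≤ 1 :=
        pow_le_one₀ (Int.fract_nonneg s) (Int.fract_lt_one s).le
      have h2 : (0:ℝ) ≤ (Int.fract t)^2 := sq_nonneg _
      rw [hg2 s, hg2 t]; linarith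
  refine ⟨hsc.continuousOn, ?_, ?_, ?_, ?_⟩
  · intro x _ y _ hxy
    rw [hg_eq, hg_eq]
    have : g ((M:ℝ)*x) ≤ g ((M:ℝ)*y) := hg_mono (by nlinarith)
    gcongr
  · simp [staircaseCDF]
  · unfold staircaseCDF
    rw [mul_one, Int.floor_natCast]
    push_cast
    rw [sub_self]
    field_simp
    norm_num
  · intro i hi a b
    set d0 : ℝ := a*i + b*M - i with hd0
    have hform : ∀ x ∈ Set.uIcc ((i:ℝ)/M) (((i:ℝ)+1)/M),
        |staircaseCDF M x - (a*x+b)|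
          = (fun u => |u^2 - (a*u + d0)| / (M:ℝ)) ((M:ℝ)*x + (-(i:ℝ))) := by
      intro x hx
      rw [Set.uIcc_of_le (by gcongr <;> norm_num : (i:ℝ)/M ≤ ((i:ℝ)+1)/M)] at hx
      obtain ⟨hx1, hx2⟩ := hx
      have hsval : staircaseCDF M x = (((M:ℝ)*x - i)^2 + i)/M := by
        rcases lt_or_eq_of_le hx2 with hlt | heq
        · have hfl : ⌊(M:ℝ)*x⌋ = (i:ℤ) := by
            rw [Int.floor_eq_iff]
            constructor
            · push_cast
              calc (i:ℝ) = M * ((i:ℝ)/M) := by field_simp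
                _ ≤ M*x := by nlinarith
            · push_cast
              calc (M:ℝ)*x < M * (((i:ℝ)+1)/M) := by nlinarith
                _ = (i:ℝ)+1 := by field_simp
          unfold staircaseCDF
          rw [hfl]; push_cast; ring
        · have hMx : (M:ℝ)*x = (i:ℝ) + 1 := by
            rw [heq]; field_simp
          have hfl : ⌊(M:ℝ)*x⌋ = (i:ℤ) + 1 := by
            rw [hMx]
            have h5 : ((i:ℝ)+1) = (((i:ℤ)+1 : ℤ):ℝ) := by push_cast; ring
            rw [h5, Int.floor_intCast]
          unfold staircaseCDF
          rw [hfl, hMx]; push_cast; ring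
      rw [hsval]
      have : (((M:ℝ)*x - i)^2 + i)/M - (a*x+b)
          = (((M:ℝ)*x + (-(i:ℝ)))^2 - (a*((M:ℝ)*x + (-(i:ℝ))) + d0))/M := by
        rw [hd0]; field_simp; ring
      rw [this, abs_div, abs_of_pos hM0]
    rw [intervalIntegral.integral_congr hform,
        intervalIntegral.integral_comp_mul_add
          (fun u => |u^2 - (a*u + d0)| / (M:ℝ)) hMne (-(i:ℝ))]
    have e1 : (M:ℝ) * ((i:ℝ)/M) + (-(i:ℝ)) = 0 := by field_simp; ring
    have e2 : (M:ℝ) * (((i:ℝ)+1)/M) + (-(i:ℝ)) = 1 := by field_simp; ring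
    rw [e1, e2]
    have hkey := quad_affine_L1 a d0
    have hdiv : ∫ u in (0:ℝ)..1, |u^2 - (a*u + d0)| / M
        = (∫ u in (0:ℝ)..1, |u^2 - (a*u + d0)|) / M := intervalIntegral.integral_div _ _
    rw [smul_eq_mul, hdiv]
    calc (1:ℝ) / (16 * (M:ℝ)^2) = (1/16) / M / M := by field_simp
      _ ≤ (∫ u in (0:ℝ)..1, |u^2 - (a*u + d0)|) / M / M := by
          gcongr
      _ = (M:ℝ)⁻¹ * ((∫ u in (0:ℝ)..1, |u^2 - (a*u + d0)|) / M) := by ring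
end

section
/- Lower bound for K-piecewise linear approximation of the staircase CDF: with F_M as above and any function h that is affine on each interval of some partition of [0,1] into K intervals, if M ≥ K then ∫₀¹ |F_M(x) − h(x)| dx ≥ (M − K + 1)/(16M²). In particular, choosing M = 2(K−1) gives error at least 1/(64(K−1)). -/
open MeasureTheory intervalIntegral

lemma quad_L1 (m c a b : ℝ) (hm : 0 < m) :
    1/(16*m^2) ≤ ∫ x in (c/m)..((c+1)/m), |(m*x - c)^2/m + c/m - (a*x+b)| := by
  have hm' : m ≠ 0 := ne_of_gt hm
  set f : ℝ → ℝ := fun x => (m*x - c)^2/m + c/m - (a*x+b) with hf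
  set P : ℝ → ℝ := fun x => m*x^3/3 - (2*c+a)*x^2/2 + (c^2/m + c/m - b)*x with hP
  have hcont : Continuous f := by fun_prop
  have hderiv : ∀ x : ℝ, HasDerivAt P (f x) x := by
    intro x
    have h1 : HasDerivAt P (m*(↑3*x^(3-1))/3 - (2*c+a)*(↑2*x^(2-1))/2 + (c^2/m + c/m - b)*1) x := by
      exact ((((hasDerivAt_pow 3 x).const_mul m).div_const 3).sub
        (((hasDerivAt_pow 2 x).const_mul (2*c+a)).div_const 2)).add
        ((hasDerivAt_id' x).const_mul (c^2/m + c/m - b))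
    convert h1 using 1
    simp only [hf, mul_one]
    push_cast
    field_simp
    ring
  have key : ∀ u v : ℝ, ∫ x in u..v, f x = P v - P u := fun u v =>
    integral_eq_sub_of_hasDerivAt (fun x _ => hderiv x) (hcont.intervalIntegrable u v)
  set p0 := c/m with hp0
  set p1 := (c+1/4)/m with hp1
  set p2 := (c+3/4)/m with hp2
  set p3 := (c+1)/m with hp3
  have h01 : p0 ≤ p1 := by rw [hp0, hp1]; gcongr; linarith
  have h12 : p1 ≤ p2 := by rw [hp1, hp2]; gcongr; linarith
  have h23 : p2 ≤ p3 := by rw [hp2, hp3]; gcongr; linarith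
  have hia : ∀ u v : ℝ, IntervalIntegrable (fun x => |f x|) volume u v :=
    fun u v => (hcont.abs).intervalIntegrable u v
  have hsplit : ∫ x in p0..p3, |f x|
      = (∫ x in p0..p1, |f x|) + (∫ x in p1..p2, |f x|) + (∫ x in p2..p3, |f x|) := by
    rw [integral_add_adjacent_intervals (hia p0 p1) (hia p1 p2),
        integral_add_adjacent_intervals (hia p0 p2) (hia p2 p3)]
  have b1 : ∫ x in p0..p1, f x ≤ ∫ x in p0..p1, |f x| :=
    integral_mono_on h01 (hcont.intervalIntegrable _ _) (hia _ _) (fun x _ => le_abs_self _)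
  have b2 : ∫ x in p1..p2, -f x ≤ ∫ x in p1..p2, |f x| :=
    integral_mono_on h12 ((hcont.neg).intervalIntegrable _ _) (hia _ _) (fun x _ => neg_le_abs _)
  have b3 : ∫ x in p2..p3, f x ≤ ∫ x in p2..p3, |f x| :=
    integral_mono_on h23 (hcont.intervalIntegrable _ _) (hia _ _) (fun x _ => le_abs_self _)
  rw [intervalIntegral.integral_neg] at b2
  have hval : (∫ x in p0..p1, f x) - (∫ x in p1..p2, f x) + (∫ x in p2..p3, f x) = 1/(16*m^2) := by
    rw [key, key, key, hP]
    simp only [hp0, hp1, hp2, hp3]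
    field_simp
    ring
  calc 1/(16*m^2) = (∫ x in p0..p1, f x) - (∫ x in p1..p2, f x) + (∫ x in p2..p3, f x) := hval.symm
    _ ≤ (∫ x in p0..p1, |f x|) + (∫ x in p1..p2, |f x|) + (∫ x in p2..p3, |f x|) := by linarith
    _ = ∫ x in p0..p3, |f x| := hsplit.symm

/-- Lower bound for `K`-piecewise linear approximation of the staircase CDF: if `h` is
affine on each interval of some partition of `[0,1]` into `K` intervals and `M ≥ K`,
then `∫₀¹ |F_M − h| ≥ (M − K + 1)/(16M²)`. -/
theorem staircase_piecewise_linear_lower_bound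
    (M K : ℕ) (hK : 0 < K) (hMK : K ≤ M)
    (h : ℝ → ℝ)
    (t : Fin (K + 1) → ℝ) (ht : Monotone t)
    (ht0 : t 0 = 0) (htK : t (Fin.last K) = 1)
    (α β : Fin K → ℝ)
    (haff : ∀ k : Fin K, ∀ x ∈ Set.Ico (t k.castSucc) (t k.succ),
      h x = α k * x + β k) :
    ((M : ℝ) - K + 1) / (16 * (M : ℝ) ^ 2)
      ≤ ∫ x in (0 : ℝ)..1, |staircaseCDF M x - h x| := by
  classical
  have hM : 0 < M := lt_of_lt_of_le hK hMK
  have hMr : (0:ℝ) < (M:ℝ) := by exact_mod_cast hM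
  have hMne : (M:ℝ) ≠ 0 := ne_of_gt hMr
  set τ : ℕ → ℝ := fun i => (i:ℝ)/(M:ℝ) with hτ
  have hτ_mono : ∀ i j : ℕ, i ≤ j → τ i ≤ τ j := by
    intro i j hij
    simp only [hτ]
    have hcast : (i:ℝ) ≤ (j:ℝ) := by exact_mod_cast hij
    gcongr
  have hτle : ∀ i : ℕ, τ i ≤ τ (i+1) := fun i => hτ_mono i (i+1) (Nat.le_succ i)
  have hτ0 : ∀ i : ℕ, 0 ≤ τ i := fun i => by simp only [hτ]; positivity
  have hτ1 : ∀ i : ℕ, i ≤ M → τ i ≤ 1 := by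
    intro i hi; simp only [hτ]; rw [div_le_one hMr]; exact_mod_cast hi
  -- each point of [0,1) lies in some piece
  have hcover : ∀ x : ℝ, 0 ≤ x → x < 1 → ∃ k : Fin K, t k.castSucc ≤ x ∧ x < t k.succ := by
    intro x hx0 hx1
    set S : Finset (Fin (K+1)) := Finset.univ.filter (fun j => t j ≤ x) with hS
    have hS0 : (0 : Fin (K+1)) ∈ S := by
      simp only [hS, Finset.mem_filter, Finset.mem_univ, true_and]
      rw [ht0]; exact hx0
    have hSne : S.Nonempty := ⟨0, hS0⟩
    set j := S.max' hSne with hj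
    have hjx : t j ≤ x := by
      have := S.max'_mem hSne
      simp only [hS, Finset.mem_filter, Finset.mem_univ, true_and] at this
      exact this
    have hjlast : j ≠ Fin.last K := by
      intro hcontra; rw [hcontra, htK] at hjx; linarith
    have hjlt : (j : ℕ) < K := by
      have h1 : (j:ℕ) ≤ K := Nat.lt_succ_iff.mp j.isLt
      rcases h1.lt_or_eq with h' | h'
      · exact h'
      · exact absurd (Fin.ext h' : j = Fin.last K) hjlast
    refine ⟨⟨(j:ℕ), hjlt⟩, ?_, ?_⟩
    · have hcs : (Fin.castSucc ⟨(j:ℕ), hjlt⟩) = j := by ext; simp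
      rw [hcs]; exact hjx
    · by_contra hcon
      push_neg at hcon
      have hmem : (Fin.succ ⟨(j:ℕ), hjlt⟩) ∈ S := by
        simp only [hS, Finset.mem_filter, Finset.mem_univ, true_and]; exact hcon
      have hle := S.le_max' _ hmem
      rw [← hj] at hle
      have : (j:ℕ) + 1 ≤ (j:ℕ) := by simpa [Fin.le_def] using hle
      omega
  -- global piecewise-affine version of h
  set g : ℝ → ℝ := fun x => ∑ k : Fin K,
      (Set.Ico (t k.castSucc) (t k.succ)).indicator (fun y => α k * y + β k) x with hg
  have hpieces_eq : ∀ (k : Fin K) (x : ℝ),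
      x ∈ Set.Ico (t k.castSucc) (t k.succ) → g x = α k * x + β k := by
    intro k x hx
    simp only [hg]
    rw [Finset.sum_eq_single_of_mem k (Finset.mem_univ k)]
    · exact Set.indicator_of_mem hx _
    · intro k' _ hne
      apply Set.indicator_of_notMem
      intro hx'
      rcases lt_or_gt_of_ne hne with hlt | hlt
      · have hle : t k'.succ ≤ t k.castSucc := ht (Fin.succ_le_castSucc_iff.mpr hlt)
        exact absurd (hx'.2.trans_le (hle.trans hx.1)) (lt_irrefl x)
      · have hle : t k.succ ≤ t k'.castSucc := ht (Fin.succ_le_castSucc_iff.mpr hlt)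
        exact absurd (hx.2.trans_le (hle.trans hx'.1)) (lt_irrefl x)
  have hhg : ∀ x : ℝ, 0 ≤ x → x < 1 → h x = g x := by
    intro x hx0 hx1
    obtain ⟨k, hk1, hk2⟩ := hcover x hx0 hx1
    rw [haff k x ⟨hk1, hk2⟩, hpieces_eq k x ⟨hk1, hk2⟩]
  have hg_int : ∀ u v : ℝ, IntervalIntegrable g volume u v := by
    intro u v
    rw [intervalIntegrable_iff]
    apply integrable_finset_sum
    intro k _
    exact ((Continuous.integrableOn_uIoc (by fun_prop) :
      IntegrableOn (fun y => α k * y + β k) (Set.uIoc u v) volume)).indicator measurableSet_Ico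
  -- on each subinterval the staircase is a parabola
  have hfloor : ∀ (i : ℕ) (x : ℝ), τ i ≤ x → x < τ (i+1) →
      staircaseCDF M x = ((M:ℝ)*x - (i:ℝ))^2/(M:ℝ) + (i:ℝ)/(M:ℝ) := by
    intro i x h1 h2
    simp only [hτ] at h1 h2
    have hfl : ⌊(M:ℝ)*x⌋ = (i:ℤ) := by
      rw [Int.floor_eq_iff]
      constructor
      · push_cast
        rw [div_le_iff₀ hMr] at h1
        linarith
      · push_cast
        rw [lt_div_iff₀ hMr] at h2
        push_cast at h2
        linarith
    simp only [staircaseCDF, hfl]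
    push_cast
    ring
  have hne_ae : ∀ c : ℝ, ∀ᵐ x : ℝ, x ≠ c := by
    intro c; rw [ae_iff]; simp [not_ne_iff, Set.setOf_eq_eq_singleton]
  -- a.e. identification on each subinterval
  have hcongr : ∀ i : ℕ, i < M → (∀ᵐ x : ℝ ∂volume.restrict (Set.uIoc (τ i) (τ (i+1))),
      |staircaseCDF M x - h x| = |((M:ℝ)*x - (i:ℝ))^2/(M:ℝ) + (i:ℝ)/(M:ℝ) - g x|) := by
    intro i hi
    have hres := ae_restrict_of_ae (μ := volume) (s := Set.uIoc (τ i) (τ (i+1))) (hne_ae (τ (i+1)))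
    filter_upwards [hres, ae_restrict_mem measurableSet_uIoc] with x hxne hxmem
    rw [Set.uIoc_of_le (hτle i)] at hxmem
    have hx2 : x < τ (i+1) := lt_of_le_of_ne hxmem.2 hxne
    have hx1 : τ i < x := hxmem.1
    have hx0 : 0 ≤ x := le_trans (hτ0 i) hx1.le
    have hxlt1 : x < 1 := lt_of_lt_of_le hx2 (hτ1 (i+1) hi)
    rw [hfloor i x hx1.le hx2, hhg x hx0 hxlt1]
  have hqg_int : ∀ i : ℕ, IntervalIntegrable
      (fun x => |((M:ℝ)*x - (i:ℝ))^2/(M:ℝ) + (i:ℝ)/(M:ℝ) - g x|) volume (τ i) (τ (i+1)) := by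
    intro i
    exact ((Continuous.intervalIntegrable (by fun_prop) _ _).sub (hg_int _ _)).abs
  have hint : ∀ i : ℕ, i < M →
      IntervalIntegrable (fun x => |staircaseCDF M x - h x|) volume (τ i) (τ (i+1)) := by
    intro i hi
    exact (hqg_int i).congr_ae ((hcongr i hi).mono fun x hx => hx.symm)
  have h0 : τ 0 = 0 := by simp [hτ]
  have h1 : τ M = 1 := by simp only [hτ]; exact div_self hMne
  have hsum : ∫ x in (0:ℝ)..1, |staircaseCDF M x - h x|
      = ∑ i ∈ Finset.range M, ∫ x in τ i..τ (i+1), |staircaseCDF M x - h x| := by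
    rw [intervalIntegral.sum_integral_adjacent_intervals hint, h0, h1]
  -- lower bound on good subintervals
  have hgood : ∀ i : ℕ, i < M → (∀ j : Fin (K+1), t j ∉ Set.Ioo (τ i) (τ (i+1))) →
      1/(16*(M:ℝ)^2) ≤ ∫ x in τ i..τ (i+1), |staircaseCDF M x - h x| := by
    intro i hi hnj
    have hτi1 : τ i < 1 := by
      simp only [hτ]; rw [div_lt_one hMr]; exact_mod_cast hi
    obtain ⟨k, hk1, hk2⟩ := hcover (τ i) (hτ0 i) hτi1
    have hk3 : τ (i+1) ≤ t k.succ := by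
      by_contra hcon
      push_neg at hcon
      exact hnj k.succ ⟨hk2, hcon⟩
    have heq : ∫ x in τ i..τ (i+1), |staircaseCDF M x - h x|
        = ∫ x in τ i..τ (i+1),
            |((M:ℝ)*x - (i:ℝ))^2/(M:ℝ) + (i:ℝ)/(M:ℝ) - (α k * x + β k)| := by
      apply intervalIntegral.integral_congr_ae
      filter_upwards [hne_ae (τ (i+1))] with x hxne hxmem
      rw [Set.uIoc_of_le (hτle i)] at hxmem
      have hx2 : x < τ (i+1) := lt_of_le_of_ne hxmem.2 hxne
      have hx1 : τ i < x := hxmem.1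
      rw [hfloor i x hx1.le hx2,
        haff k x ⟨hk1.trans hx1.le, hx2.trans_le hk3⟩]
    rw [heq]
    have e2 : τ (i+1) = ((i:ℝ)+1)/(M:ℝ) := by simp only [hτ]; push_cast; ring
    have e1 : τ i = (i:ℝ)/(M:ℝ) := by simp only [hτ]
    rw [e1, e2]
    exact quad_L1 (M:ℝ) (i:ℝ) (α k) (β k) hMr
  -- counting bad subintervals
  set Bad : Finset ℕ := (Finset.range M).filter
      (fun i => ∃ j : Fin (K+1), t j ∈ Set.Ioo (τ i) (τ (i+1))) with hBad
  have hBsub : Bad ⊆ Finset.range M := Finset.filter_subset _ _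
  have hBcard : Bad.card ≤ K - 1 := by
    set F : ℕ → ℕ := fun i =>
      if hi : ∃ j : Fin (K+1), t j ∈ Set.Ioo (τ i) (τ (i+1)) then (hi.choose : Fin (K+1)).val
      else 0 with hF
    have key : ∀ i ∈ Bad, ∃ j : Fin (K+1), F i = j.val ∧ t j ∈ Set.Ioo (τ i) (τ (i+1)) := by
      intro i hi
      rw [hBad, Finset.mem_filter] at hi
      obtain ⟨hiM, hex⟩ := hi
      refine ⟨hex.choose, ?_, hex.choose_spec⟩
      simp only [hF]; rw [dif_pos hex]
    have hmaps : ∀ i ∈ Bad, F i ∈ Finset.Ico 1 K := by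
      intro i hi
      obtain ⟨j, hFi, hj⟩ := key i hi
      have hiM : i < M := Finset.mem_range.mp (hBsub hi)
      rw [Finset.mem_Ico, hFi]
      constructor
      · have hpos : (0:ℝ) < t j := lt_of_le_of_lt (hτ0 i) hj.1
        by_contra hc
        push_neg at hc
        have hj0 : j = 0 := Fin.ext (by simp only [Fin.val_zero]; omega)
        rw [hj0, ht0] at hpos
        exact lt_irrefl _ hpos
      · have hlt1 : t j < 1 := lt_of_lt_of_le hj.2 (hτ1 (i+1) hiM)
        by_contra hc
        push_neg at hc
        have hjl : j = Fin.last K := Fin.ext (by have := j.isLt; simp; omega)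
        rw [hjl, htK] at hlt1
        exact lt_irrefl _ hlt1
    have hinj : Set.InjOn F ↑Bad := by
      intro i hi i' hi' hFF
      by_contra hne
      obtain ⟨j, hFi, hj⟩ := key i hi
      obtain ⟨j', hFi', hj'⟩ := key i' hi'
      have hjj : j = j' := Fin.ext (by rw [← hFi, ← hFi', hFF])
      rw [← hjj] at hj'
      rcases lt_or_gt_of_ne hne with hlt | hlt
      · have hle : τ (i+1) ≤ τ i' := hτ_mono _ _ (by omega)
        linarith [hj.2, hj'.1]
      · have hle : τ (i'+1) ≤ τ i := hτ_mono _ _ (by omega)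
        linarith [hj'.2, hj.1]
    calc Bad.card ≤ (Finset.Ico 1 K).card := Finset.card_le_card_of_injOn F hmaps hinj
      _ = K - 1 := by simp
  -- final assembly
  have hnonneg : ∀ i ∈ Finset.range M,
      0 ≤ ∫ x in τ i..τ (i+1), |staircaseCDF M x - h x| :=
    fun i _ => intervalIntegral.integral_nonneg (hτle i) (fun u _ => abs_nonneg _)
  set Good : Finset ℕ := Finset.range M \ Bad with hGood
  have hGsub : Good ⊆ Finset.range M := Finset.sdiff_subset
  have hs1 : ∑ _i ∈ Good, (1/(16*(M:ℝ)^2))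
      ≤ ∑ i ∈ Good, ∫ x in τ i..τ (i+1), |staircaseCDF M x - h x| := by
    apply Finset.sum_le_sum
    intro i hi
    rw [hGood, Finset.mem_sdiff] at hi
    obtain ⟨hiM, hiB⟩ := hi
    apply hgood i (Finset.mem_range.mp hiM)
    intro j hj
    exact hiB (by rw [hBad]; exact Finset.mem_filter.mpr ⟨hiM, ⟨j, hj⟩⟩)
  have hs2 : ∑ i ∈ Good, ∫ x in τ i..τ (i+1), |staircaseCDF M x - h x|
      ≤ ∑ i ∈ Finset.range M, ∫ x in τ i..τ (i+1), |staircaseCDF M x - h x| :=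
    Finset.sum_le_sum_of_subset_of_nonneg hGsub (fun i hi _ => hnonneg i hi)
  have hGcard : M - (K-1) ≤ Good.card := by
    rw [hGood, Finset.card_sdiff_of_subset hBsub, Finset.card_range]
    omega
  have hcast : ((M:ℝ) - K + 1) ≤ (Good.card : ℝ) := by
    have hc1 : ((M - (K-1) : ℕ) : ℝ) ≤ (Good.card : ℝ) := by exact_mod_cast hGcard
    refine le_trans ?_ hc1
    rw [Nat.cast_sub (by omega), Nat.cast_sub hK]
    push_cast
    linarith
  calc ((M:ℝ) - K + 1) / (16*(M:ℝ)^2)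
      ≤ (Good.card : ℝ) * (1/(16*(M:ℝ)^2)) := by
        rw [div_eq_mul_one_div]
        exact mul_le_mul_of_nonneg_right hcast (by positivity)
    _ = ∑ _i ∈ Good, (1/(16*(M:ℝ)^2)) := by rw [Finset.sum_const, nsmul_eq_mul]
    _ ≤ ∑ i ∈ Good, ∫ x in τ i..τ (i+1), |staircaseCDF M x - h x| := hs1
    _ ≤ ∑ i ∈ Finset.range M, ∫ x in τ i..τ (i+1), |staircaseCDF M x - h x| := hs2
    _ = ∫ x in (0:ℝ)..1, |staircaseCDF M x - h x| := hsum.symm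
end
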